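/- arXiv:1311.6193 — 5 statements merged into one kernel-verified Lean document; each statement's English description precedes it below -/
import Mathlib

section
/- For the sequence Iₖ = ∫₀^{π/2} cosᵏ(x) dx, there exists a constant C > 0 such that |√k · Iₖ − √(π/2)| ≤ C/k for all k ∈ ℕ. -/
open Real intervalIntegral

noncomputable def wallisI (k : ℕ) : ℝ := ∫ x in (0:ℝ)..(Real.pi/2), Real.cos x ^ k

lemma wallisI_zero : wallisI 0 = Real.pi / 2 := by simp [wallisI]

lemma wallisI_one : wallisI 1 = 1 := by simp [wallisI]

lemma wallisI_rec (n : ℕ) : wallisI (n + 2) = (n + 1) / (n + 2) * wallisI n := by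
  have := integral_cos_pow (a := 0) (b := Real.pi/2) (n := n)
  simpa [wallisI, Real.cos_pi_div_two, Real.sin_zero] using this

lemma wallisI_pos (n : ℕ) : 0 < wallisI n := by
  apply intervalIntegral.intervalIntegral_pos_of_pos_on
  · exact (Real.continuous_cos.pow n).intervalIntegrable 0 (Real.pi/2)
  · intro x hx
    exact pow_pos (Real.cos_pos_of_mem_Ioo ⟨by linarith [hx.1, Real.pi_pos], hx.2⟩) n
  · linarith [Real.pi_pos]

lemma wallisI_succ_le (n : ℕ) : wallisI (n + 1) ≤ wallisI n := by
  apply intervalIntegral.integral_mono_on (by positivity)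
    ((Real.continuous_cos.pow _).intervalIntegrable _ _)
    ((Real.continuous_cos.pow _).intervalIntegrable _ _)
  intro x hx
  exact pow_le_pow_of_le_one
    (Real.cos_nonneg_of_mem_Icc ⟨by linarith [hx.1, Real.pi_pos], hx.2⟩)
    (Real.cos_le_one x) (n.le_add_right 1)

lemma wallisI_prod (k : ℕ) : (k + 1 : ℝ) * wallisI (k + 1) * wallisI k = Real.pi / 2 := by
  induction k with
  | zero => simp [wallisI_zero, wallisI_one]
  | succ n ih =>
    rw [wallisI_rec n]
    have h2 : (n + 2 : ℝ) ≠ 0 := by positivity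
    push_cast
    push_cast at ih
    field_simp
    linear_combination (2 * ((n:ℝ) + 2)) * ih

/-- For the Wallis integrals `Iₖ = ∫₀^{π/2} cosᵏ x dx`, there is a constant `C > 0` with
`|√k · Iₖ − √(π/2)| ≤ C / k` for all `k ≥ 1`. -/
theorem wallis_sqrt_estimate :
    ∃ C > (0 : ℝ), ∀ k : ℕ, 1 ≤ k →
      |Real.sqrt k * (∫ x in (0 : ℝ)..(Real.pi / 2), Real.cos x ^ k) -
          Real.sqrt (Real.pi / 2)| ≤ C / k := by
  have hpi : (0:ℝ) < Real.pi / 2 := by linarith [Real.pi_pos]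
  refine ⟨Real.sqrt (Real.pi / 2), Real.sqrt_pos.mpr hpi, ?_⟩
  intro k hk
  obtain ⟨m, rfl⟩ := Nat.exists_eq_add_of_le hk
  set k := 1 + m with hkdef
  have hI := wallisI_pos k
  have hIk : wallisI k ≤ wallisI m := by
    have : m + 1 = k := by omega
    simpa [this] using wallisI_succ_le m
  have hkpos : (0:ℝ) < (k:ℝ) := by positivity
  -- upper: k * I_k^2 ≤ π/2
  have hup : (k:ℝ) * wallisI k ^ 2 ≤ Real.pi / 2 := by
    have h1 : (m + 1 : ℝ) * wallisI (m + 1) * wallisI m = Real.pi / 2 := wallisI_prod m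
    have hm1 : m + 1 = k := by omega
    rw [hm1] at h1
    push_cast [hkdef] at h1 ⊢
    nlinarith [wallisI_pos m, hI]
  -- lower: π/2 * (k/(k+1)) ≤ k * I_k^2
  have hlow : Real.pi / 2 * ((k:ℝ) / (k + 1)) ≤ (k:ℝ) * wallisI k ^ 2 := by
    have h1 : (k + 1 : ℝ) * wallisI (k + 1) * wallisI k = Real.pi / 2 := by
      exact_mod_cast wallisI_prod k
    have h2 : wallisI (k + 1) ≤ wallisI k := wallisI_succ_le k
    have : Real.pi / 2 ≤ (k + 1 : ℝ) * wallisI k ^ 2 := by nlinarith [wallisI_pos (k+1)]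
    have h3 : Real.pi / 2 * ((k:ℝ)/(k+1)) = (Real.pi/2 * k)/((k:ℝ)+1) := by ring
    rw [h3, div_le_iff₀ (by positivity)]
    nlinarith [mul_le_mul_of_nonneg_left this hkpos.le]
  -- √k * I_k = √(k * I_k^2)
  have hsq : Real.sqrt k * wallisI k = Real.sqrt ((k:ℝ) * wallisI k ^ 2) := by
    rw [Real.sqrt_mul (le_of_lt hkpos), Real.sqrt_sq hI.le]
  have hub : Real.sqrt k * wallisI k ≤ Real.sqrt (Real.pi / 2) := by
    rw [hsq]; exact Real.sqrt_le_sqrt hup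
  have hlb : Real.sqrt (Real.pi / 2) * ((k:ℝ) / (k + 1)) ≤ Real.sqrt k * wallisI k := by
    rw [hsq]
    have h1 : Real.sqrt (Real.pi / 2 * ((k:ℝ) / (k + 1))) ≤
        Real.sqrt ((k:ℝ) * wallisI k ^ 2) := Real.sqrt_le_sqrt hlow
    have hr : (0:ℝ) ≤ (k:ℝ) / (k + 1) := by positivity
    have hr1 : (k:ℝ) / (k + 1) ≤ 1 := by
      rw [div_le_one (by positivity)]; linarith
    calc Real.sqrt (Real.pi / 2) * ((k:ℝ) / (k + 1))
        ≤ Real.sqrt (Real.pi / 2) * Real.sqrt ((k:ℝ) / (k + 1)) := by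
          gcongr
          have h2 := Real.sqrt_le_sqrt (show ((k:ℝ)/(k+1))^2 ≤ (k:ℝ)/(k+1) by nlinarith)
          rwa [Real.sqrt_sq hr] at h2
      _ = Real.sqrt (Real.pi / 2 * ((k:ℝ) / (k + 1))) := (Real.sqrt_mul hpi.le _).symm
      _ ≤ _ := h1
  have hWI : wallisI k = ∫ x in (0:ℝ)..(Real.pi/2), Real.cos x ^ k := rfl
  rw [← hWI]
  rw [abs_le]
  constructor
  · have : Real.sqrt (Real.pi/2) - Real.sqrt (Real.pi/2) * ((k:ℝ)/(k+1)) =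
        Real.sqrt (Real.pi/2) * (1/(k+1)) := by field_simp; ring
    have hle : Real.sqrt (Real.pi/2) * (1/(k+1)) ≤ Real.sqrt (Real.pi/2) / k := by
      rw [mul_one_div, div_le_div_iff₀ (by positivity) hkpos]
      nlinarith [Real.sqrt_nonneg (Real.pi/2)]
    linarith
  · have : (0:ℝ) ≤ Real.sqrt (Real.pi/2) / k := by positivity
    linarith
end

section
/- Let X₁, …, Xₙ be centered normal random variables with variances σₖ², possibly correlated. Then E[max(|X₁|, …, |Xₙ|)] ≤ 2·(max_{1≤k≤n} σₖ)·√(ln(n+1)). -/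
open MeasureTheory ProbabilityTheory
open scoped NNReal ENNReal

open Real

lemma gauss_pdf_mul_exp (s : ℝ) {v : ℝ≥0} (hv : v ≠ 0) (x : ℝ) :
    gaussianPDFReal 0 v x * Real.exp (s * x)
      = Real.exp (s ^ 2 * v / 2) * gaussianPDFReal (s * v) v x := by
  have hv' : (v : ℝ) ≠ 0 := by exact_mod_cast hv
  simp only [gaussianPDFReal, sub_zero]
  rw [mul_assoc ((Real.sqrt (2 * π * (v:ℝ)))⁻¹), ← Real.exp_add,
    mul_comm (Real.exp (s ^ 2 * (v:ℝ) / 2)),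
    mul_assoc ((Real.sqrt (2 * π * (v:ℝ)))⁻¹), ← Real.exp_add]
  congr 1
  field_simp
  ring

lemma integrable_exp_mul_gaussianReal (s : ℝ) (v : ℝ≥0) :
    Integrable (fun x => Real.exp (s * x)) (gaussianReal 0 v) := by
  by_cases hv : v = 0
  · rw [hv, gaussianReal_zero_var]
    have h1 : Integrable (fun _ : ℝ => Real.exp (s * 0)) (Measure.dirac (0 : ℝ)) :=
      integrable_const _
    exact h1.congr (ae_eq_dirac fun x => Real.exp (s * x)).symm
  rw [gaussianReal_of_var_ne_zero _ hv,
    integrable_withDensity_iff (measurable_gaussianPDF 0 v)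
      (ae_of_all _ fun x => ENNReal.ofReal_lt_top)]
  have heq : ∀ x : ℝ, Real.exp (s * x) * (gaussianPDF 0 v x).toReal
      = Real.exp (s ^ 2 * v / 2) * gaussianPDFReal (s * v) v x := by
    intro x
    rw [gaussianPDF, ENNReal.toReal_ofReal (gaussianPDFReal_nonneg _ _ _), mul_comm,
      gauss_pdf_mul_exp s hv]
  simp only [heq]
  exact (integrable_gaussianPDFReal _ _).const_mul _

lemma integral_exp_mul_gaussianReal (s : ℝ) (v : ℝ≥0) :
    ∫ x, Real.exp (s * x) ∂(gaussianReal 0 v) = Real.exp (s ^ 2 * v / 2) := by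
  by_cases hv : v = 0
  · rw [hv, gaussianReal_zero_var, integral_dirac]
    simp
  rw [gaussianReal_of_var_ne_zero _ hv]
  have hd : gaussianPDF 0 v = fun x => ((gaussianPDFReal 0 v x).toNNReal : ℝ≥0∞) := rfl
  rw [hd, integral_withDensity_eq_integral_smul
    ((measurable_gaussianPDFReal 0 v).real_toNNReal)]
  have heq : ∀ x : ℝ, (Real.toNNReal (gaussianPDFReal 0 v x)) • Real.exp (s * x)
      = Real.exp (s ^ 2 * v / 2) * gaussianPDFReal (s * v) v x := by
    intro x
    rw [NNReal.smul_def, smul_eq_mul, Real.coe_toNNReal _ (gaussianPDFReal_nonneg _ _ _),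
      gauss_pdf_mul_exp s hv]
  simp only [heq]
  rw [integral_const_mul, integral_gaussianPDFReal_eq_one _ hv, mul_one]

set_option maxHeartbeats 1000000 in
/-- Maximal inequality for (possibly correlated) jointly Gaussian centered normal random
variables `Xₖ ~ N(0, vₖ)`: `E[max |Xₖ|] ≤ 2 (maxₖ σₖ) √(ln (n+1))` where `σₖ = √vₖ`. -/
theorem expectation_max_abs_gaussian_le {Ω : Type*} [MeasureSpace Ω]
    [IsProbabilityMeasure (ℙ : Measure Ω)] (n : ℕ) (hn : 0 < n)
    (X : Fin n → Ω → ℝ) (v : Fin n → ℝ≥0)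
    (hjoint : ∀ a : Fin n → ℝ, ∃ V : ℝ≥0,
      Measure.map (fun ω => ∑ k, a k * X k ω) ℙ = gaussianReal 0 V)
    (hmarg : ∀ k, Measure.map (X k) ℙ = gaussianReal 0 (v k)) :
    ∫ ω, (⨆ k : Fin n, |X k ω|) ∂ℙ ≤
      2 * (⨆ k : Fin n, Real.sqrt (v k)) * Real.sqrt (Real.log (n + 1)) := by
  have hne : Nonempty (Fin n) := ⟨⟨0, hn⟩⟩
  -- a.e.-measurability of each `X k`
  have hXae : ∀ k, AEMeasurable (X k) ℙ := by
    intro k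
    refine aemeasurable_of_map_neZero ?_
    rw [hmarg k]
    exact ⟨(IsProbabilityMeasure.ne_zero _)⟩
  set σ : ℝ := ⨆ k : Fin n, Real.sqrt (v k) with hσ
  have hbdd : BddAbove (Set.range fun k : Fin n => Real.sqrt (v k)) :=
    Set.Finite.bddAbove (Set.finite_range _)
  have hσ_ge : ∀ k, Real.sqrt (v k) ≤ σ := fun k => le_ciSup hbdd k
  by_cases hv0 : ∀ k, v k = 0
  · -- degenerate case : all variances vanish
    have hz : ∀ᵐ ω ∂ℙ, ∀ k, X k ω = 0 := by
      rw [ae_all_iff]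
      intro k
      have h0 : ℙ (X k ⁻¹' {(0:ℝ)}ᶜ) = 0 := by
        rw [← Measure.map_apply_of_aemeasurable (hXae k) (measurableSet_singleton (0:ℝ)).compl,
          hmarg k, hv0 k, gaussianReal_zero_var, Measure.dirac_apply' _ (measurableSet_singleton (0:ℝ)).compl]
        simp
      rw [ae_iff]
      exact h0
    have hint0 : ∫ ω, (⨆ k : Fin n, |X k ω|) ∂ℙ = 0 := by
      rw [← integral_zero Ω ℝ]
      refine integral_congr_ae ?_
      filter_upwards [hz] with ω hω
      simp [hω]
    have hσ0 : σ = 0 := by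
      rw [hσ]
      have : (fun k : Fin n => Real.sqrt (v k)) = fun _ => 0 := by
        funext k; rw [hv0 k]; simp
      rw [this, ciSup_const]
    rw [hint0, hσ0]
    simp
  -- main case
  push_neg at hv0
  obtain ⟨k₀, hk₀⟩ := hv0
  have hσpos : 0 < σ := lt_of_lt_of_le (Real.sqrt_pos.mpr (by exact_mod_cast pos_iff_ne_zero.mpr hk₀)) (hσ_ge k₀)
  set L : ℝ := Real.log (n + 1) with hL
  have hLpos : 0 < L := Real.log_pos (by nlinarith [show (1:ℝ) ≤ (n:ℝ) from by exact_mod_cast hn])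
  have hsL : 0 < Real.sqrt L := Real.sqrt_pos.mpr hLpos
  set t : ℝ := 2 * Real.sqrt L / σ with ht_def
  have ht : 0 < t := by positivity
  set M : Ω → ℝ := fun ω => ⨆ k : Fin n, |X k ω| with hM
  have hMae : AEMeasurable M ℙ := AEMeasurable.iSup fun k => continuous_abs.measurable.comp_aemeasurable (hXae k)
  have hMbdd : ∀ ω, BddAbove (Set.range fun k : Fin n => |X k ω|) := fun ω =>
    Set.Finite.bddAbove (Set.finite_range _)
  have hMnonneg : ∀ ω, 0 ≤ M ω := fun ω =>
    le_trans (abs_nonneg _) (le_ciSup (hMbdd ω) k₀)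
  -- integrability of the exponentials
  have hint : ∀ (s : ℝ) (k : Fin n), Integrable (fun ω => Real.exp (s * X k ω)) ℙ := by
    intro s k
    have h1 := integrable_exp_mul_gaussianReal s (v k)
    rw [← hmarg k] at h1
    exact (integrable_map_measure (Continuous.aestronglyMeasurable (by continuity)) (hXae k)).mp h1
  have hval : ∀ (s : ℝ) (k : Fin n),
      ∫ ω, Real.exp (s * X k ω) ∂ℙ = Real.exp (s ^ 2 * v k / 2) := by
    intro s k
    rw [← integral_exp_mul_gaussianReal s (v k), ← hmarg k,
      integral_map (hXae k) (Continuous.aestronglyMeasurable (by continuity))]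
  set g : Ω → ℝ := fun ω => ∑ k : Fin n, (Real.exp (t * X k ω) + Real.exp ((-t) * X k ω))
    with hg_def
  have hg_int : Integrable g ℙ :=
    integrable_finset_sum _ fun k _ => (hint t k).add (hint (-t) k)
  -- pointwise bound `exp (t * M ω) ≤ g ω`
  have hpt : ∀ ω, Real.exp (t * M ω) ≤ g ω := by
    intro ω
    obtain ⟨j, hj⟩ := Finite.exists_max fun k : Fin n => |X k ω|
    have hMj : M ω = |X j ω| := le_antisymm (ciSup_le hj) (le_ciSup (hMbdd ω) j)
    have h1 : Real.exp (t * M ω) ≤ Real.exp (t * X j ω) + Real.exp ((-t) * X j ω) := by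
      rw [hMj]
      rcases abs_cases (X j ω) with ⟨h, _⟩ | ⟨h, _⟩ <;> rw [h]
      · exact le_add_of_le_of_nonneg le_rfl (Real.exp_nonneg _)
      · rw [mul_neg, ← neg_mul]
        exact le_add_of_nonneg_of_le (Real.exp_nonneg _) le_rfl
    refine h1.trans ?_
    exact Finset.single_le_sum (f := fun k => Real.exp (t * X k ω) + Real.exp ((-t) * X k ω))
      (fun k _ => by positivity) (Finset.mem_univ j)
  -- integrability of `exp (t * M)` and of `M`
  have hexpM_meas : AEStronglyMeasurable (fun ω => Real.exp (t * M ω)) ℙ :=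
    (Real.measurable_exp.comp_aemeasurable (hMae.const_mul t)).aestronglyMeasurable
  have hexpM_int : Integrable (fun ω => Real.exp (t * M ω)) ℙ := by
    refine Integrable.mono' hg_int hexpM_meas (ae_of_all _ fun ω => ?_)
    rw [Real.norm_eq_abs, abs_of_nonneg (Real.exp_nonneg _)]
    exact hpt ω
  have hM_int : Integrable M ℙ := by
    refine Integrable.mono' (hexpM_int.const_mul t⁻¹) hMae.aestronglyMeasurable
      (ae_of_all _ fun ω => ?_)
    rw [Real.norm_eq_abs, abs_of_nonneg (hMnonneg ω)]
    have h1 : t * M ω ≤ Real.exp (t * M ω) := (Real.add_one_le_exp _).trans' (by linarith)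
    calc M ω = t⁻¹ * (t * M ω) := by field_simp
    _ ≤ t⁻¹ * Real.exp (t * M ω) := by
        exact mul_le_mul_of_nonneg_left h1 (by positivity)
  -- Jensen
  have hjen : Real.exp (t * ∫ ω, M ω ∂ℙ) ≤ ∫ ω, Real.exp (t * M ω) ∂ℙ := by
    have h := convexOn_exp.map_integral_le Real.continuous_exp.continuousOn isClosed_univ
      (ae_of_all _ fun ω => Set.mem_univ (t * M ω)) (hM_int.const_mul t)
      (by exact hexpM_int)
    rwa [integral_const_mul] at h
  -- bound the integral of g
  have hgval : ∫ ω, g ω ∂ℙ ≤ 2 * n * Real.exp (t ^ 2 * σ ^ 2 / 2) := by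
    rw [hg_def, integral_finset_sum (f := fun (k : Fin n) ω => Real.exp (t * X k ω) + Real.exp ((-t) * X k ω))
      Finset.univ (fun k _ => (hint t k).add (hint (-t) k))]
    have hterm : ∀ k : Fin n, ∫ ω, (Real.exp (t * X k ω) + Real.exp ((-t) * X k ω)) ∂ℙ
        ≤ 2 * Real.exp (t ^ 2 * σ ^ 2 / 2) := by
      intro k
      rw [integral_add (hint t k) (hint (-t) k), hval t k, hval (-t) k]
      have hv_le : (v k : ℝ) ≤ σ ^ 2 := by
        nlinarith [hσ_ge k, Real.sq_sqrt (v k).coe_nonneg, Real.sqrt_nonneg ((v k : ℝ))]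
      have he : Real.exp (t ^ 2 * (v k : ℝ) / 2) ≤ Real.exp (t ^ 2 * σ ^ 2 / 2) :=
        Real.exp_le_exp.mpr (by nlinarith [sq_nonneg t])
      have he' : Real.exp ((-t) ^ 2 * (v k : ℝ) / 2) ≤ Real.exp (t ^ 2 * σ ^ 2 / 2) := by
        rw [neg_sq]; exact he
      linarith
    calc ∑ k : Fin n, ∫ ω, (Real.exp (t * X k ω) + Real.exp ((-t) * X k ω)) ∂ℙ
        ≤ ∑ _k : Fin n, 2 * Real.exp (t ^ 2 * σ ^ 2 / 2) := Finset.sum_le_sum fun k _ => hterm k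
      _ = 2 * n * Real.exp (t ^ 2 * σ ^ 2 / 2) := by
          rw [Finset.sum_const, Finset.card_univ, Fintype.card_fin, nsmul_eq_mul]
          ring
  -- conclude
  have hn' : (0:ℝ) < n := by exact_mod_cast hn
  have hkey : t * ∫ ω, M ω ∂ℙ ≤ Real.log (2 * n) + t ^ 2 * σ ^ 2 / 2 := by
    have h1 : ∫ ω, Real.exp (t * M ω) ∂ℙ ≤ ∫ ω, g ω ∂ℙ :=
      integral_mono hexpM_int hg_int hpt
    have h2 : Real.exp (t * ∫ ω, M ω ∂ℙ) ≤ 2 * n * Real.exp (t ^ 2 * σ ^ 2 / 2) :=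
      hjen.trans (h1.trans hgval)
    have h3 := (Real.le_log_iff_exp_le (by positivity)).mpr h2
    rwa [Real.log_mul (by positivity) (Real.exp_ne_zero _), Real.log_exp] at h3
  have hlog : Real.log (2 * n) ≤ 2 * L := by
    have h2n : (2:ℝ) * n ≤ ((n:ℝ) + 1) ^ 2 := by nlinarith
    calc Real.log (2 * n) ≤ Real.log (((n:ℝ) + 1) ^ 2) :=
          Real.log_le_log (by positivity) h2n
      _ = 2 * L := by rw [Real.log_pow, hL]; push_cast; ring
  have hsq : Real.sqrt L ^ 2 = L := Real.sq_sqrt hLpos.le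
  have ht2 : t * (2 * σ * Real.sqrt L) = 4 * L := by
    rw [ht_def]
    field_simp
    nlinarith [hsq]
  rw [← mul_le_mul_iff_right₀ ht, ht2]
  nlinarith [hkey, hlog, hsq]
end

section
/- Let T = A ∪ B ∪ C ∪ D be an index set and X = (X(t) : t ∈ T) a stochastic process. Suppose (1) X restricted to A and X restricted to C are conditionally independent given X restricted to B, and (2) there exists C′ ⊆ C such that X restricted to A ∪ B ∪ C and X restricted to D are conditionally independent given X restricted to C′. Then X restricted to A and X restricted to C ∪ D are conditionally independent given X restricted to B. -/
open MeasureTheory ProbabilityTheory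

/-- The σ-algebra generated by the random variables `(X t : t ∈ S)`. -/
def procSigma {T Ω : Type*} [MeasurableSpace Ω] (X : T → Ω → ℝ) (S : Set T) :
    MeasurableSpace Ω :=
  ⨆ t ∈ S, MeasurableSpace.comap (X t) inferInstance

theorem procSigma_le {T Ω : Type*} [m : MeasurableSpace Ω] {X : T → Ω → ℝ}
    (hX : ∀ t, Measurable (X t)) (S : Set T) : procSigma X S ≤ m :=
  iSup₂_le fun t _ => (hX t).comap_le

section Aux

open MeasurableSpace Filter

variable {Ω : Type*}

/-- The π-system of intersections of sets from two σ-algebras. -/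
def piInterSets (m₁ m₂ : MeasurableSpace Ω) : Set (Set Ω) :=
  {s | ∃ s₁ s₂, MeasurableSet[m₁] s₁ ∧ MeasurableSet[m₂] s₂ ∧ s = s₁ ∩ s₂}

lemma isPiSystem_piInterSets (m₁ m₂ : MeasurableSpace Ω) : IsPiSystem (piInterSets m₁ m₂) := by
  rintro s ⟨s₁, s₂, hs₁, hs₂, rfl⟩ t ⟨t₁, t₂, ht₁, ht₂, rfl⟩ -
  exact ⟨s₁ ∩ t₁, s₂ ∩ t₂, hs₁.inter ht₁, hs₂.inter ht₂, by ext x; simp; tauto⟩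

lemma sup_eq_generateFrom_piInterSets (m₁ m₂ : MeasurableSpace Ω) :
    m₁ ⊔ m₂ = generateFrom (piInterSets m₁ m₂) := by
  refine le_antisymm (sup_le (fun s hs => ?_) (fun s hs => ?_)) (generateFrom_le ?_)
  · exact measurableSet_generateFrom ⟨s, Set.univ, hs, MeasurableSet.univ,
      (Set.inter_univ s).symm⟩
  · exact measurableSet_generateFrom ⟨Set.univ, s, MeasurableSet.univ, hs,
      (Set.univ_inter s).symm⟩
  · rintro s ⟨s₁, s₂, hs₁, hs₂, rfl⟩
    exact ((le_sup_left : m₁ ≤ m₁ ⊔ m₂) s₁ hs₁).inter ((le_sup_right : m₂ ≤ m₁ ⊔ m₂) s₂ hs₂)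

lemma indicator_one_inter (s t : Set Ω) :
    (s ∩ t).indicator (fun _ => (1:ℝ)) = s.indicator (t.indicator (fun _ => (1:ℝ))) :=
  (Set.indicator_indicator s t _).symm

lemma indicator_eq_mul_indicator_one (s : Set Ω) (g : Ω → ℝ) :
    s.indicator g = g * s.indicator (fun _ => (1:ℝ)) := by
  ext x
  by_cases hx : x ∈ s <;> simp [Set.indicator_apply, hx]

lemma indicator_ae_congr {mΩ : MeasurableSpace Ω} {μ : Measure Ω} (s : Set Ω) {f g : Ω → ℝ}
    (h : f =ᵐ[μ] g) : s.indicator f =ᵐ[μ] s.indicator g := by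
  filter_upwards [h] with x hx
  by_cases hs : x ∈ s <;> simp [Set.indicator_apply, hs, hx]

lemma procSigma_mono {T : Type*} {mΩ : MeasurableSpace Ω} (X : T → Ω → ℝ) {S S' : Set T}
    (h : S ⊆ S') : procSigma X S ≤ procSigma X S' :=
  biSup_mono h

lemma procSigma_union {T : Type*} {mΩ : MeasurableSpace Ω} (X : T → Ω → ℝ) (S S' : Set T) :
    procSigma X (S ∪ S') = procSigma X S ⊔ procSigma X S' := by
  rw [procSigma, iSup_union]
  rfl

section meas
variable {mΩ : MeasurableSpace Ω} {μ : Measure Ω} [IsProbabilityMeasure μ]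

lemma integrable_indicator_one {t : Set Ω} (ht : MeasurableSet t) :
    Integrable (t.indicator (fun _ => (1:ℝ))) μ :=
  (integrable_const 1).indicator ht

omit [IsProbabilityMeasure μ] in
lemma condexp_indicator_one_nonneg (m : MeasurableSpace Ω) (t : Set Ω) :
    0 ≤ᵐ[μ] μ⟦t | m⟧ :=
  condExp_nonneg (Eventually.of_forall (Set.indicator_nonneg (fun _ _ => zero_le_one)))

lemma condexp_indicator_one_le_one {m : MeasurableSpace Ω} (hm : m ≤ mΩ) {t : Set Ω}
    (ht : MeasurableSet[mΩ] t) : μ⟦t | m⟧ ≤ᵐ[μ] fun _ => (1:ℝ) := by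
  have h := condExp_mono (μ := μ) (m := m) (integrable_indicator_one ht) (integrable_const 1)
    (Eventually.of_forall (fun x => Set.indicator_le_self' (fun _ _ => zero_le_one) x))
  rwa [condExp_const hm] at h

lemma norm_condexp_indicator_one_le_one {m : MeasurableSpace Ω} (hm : m ≤ mΩ) {t : Set Ω}
    (ht : MeasurableSet[mΩ] t) : ∀ᵐ x ∂μ, ‖(μ⟦t | m⟧) x‖ ≤ 1 := by
  filter_upwards [condexp_indicator_one_nonneg m t (μ := μ),
    condexp_indicator_one_le_one hm ht] with x h0 h1
  rw [Real.norm_eq_abs, abs_le]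
  exact ⟨le_trans (by norm_num) h0, h1⟩

end meas

/-- If `m₁` and `m₂` are conditionally independent given `m'`, then conditioning an `m₂`-event
on `m₁ ⊔ m'` is the same as conditioning on `m'`. -/
lemma condexp_indicator_sup_eq_of_condIndep {m' m₁ m₂ mΩ : MeasurableSpace Ω}
    [StandardBorelSpace Ω] {μ : Measure Ω} [IsProbabilityMeasure μ]
    (hm' : m' ≤ mΩ) (hm₁ : m₁ ≤ mΩ) (hm₂ : m₂ ≤ mΩ)
    (h : CondIndep m' m₁ m₂ hm' μ) {t : Set Ω} (ht : MeasurableSet[m₂] t) :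
    μ⟦t | m₁ ⊔ m'⟧ =ᵐ[μ] μ⟦t | m'⟧ := by
  have hsup : m₁ ⊔ m' ≤ mΩ := sup_le hm₁ hm'
  have htΩ : MeasurableSet[mΩ] t := hm₂ t ht
  have hf_int : Integrable (t.indicator (fun _ => (1:ℝ))) μ := integrable_indicator_one htΩ
  have hprod := (condIndep_iff m' m₁ m₂ hm' hm₁ hm₂ μ).mp h
  have hC : ∀ s, MeasurableSet[m₁ ⊔ m'] s →
      ∫ x in s, (μ⟦t | m'⟧) x ∂μ = ∫ x in s, t.indicator (fun _ => (1:ℝ)) x ∂μ := by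
    refine MeasurableSpace.induction_on_inter (m := m₁ ⊔ m')
      (sup_eq_generateFrom_piInterSets m₁ m') (isPiSystem_piInterSets m₁ m')
      (by simp) ?_ ?_ ?_
    · rintro u ⟨s₁, s₂, hs₁, hs₂, rfl⟩
      have hs₁Ω : MeasurableSet[mΩ] s₁ := hm₁ s₁ hs₁
      have hs₂Ω : MeasurableSet[mΩ] s₂ := hm' s₂ hs₂
      have hind_int : Integrable (s₁.indicator (μ⟦t | m'⟧)) μ :=
        integrable_condExp.indicator hs₁Ω
      have hmul : μ[s₁.indicator (μ⟦t | m'⟧) | m'] =ᵐ[μ] μ⟦s₁ ∩ t | m'⟧ := by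
        have e1 : s₁.indicator (μ⟦t | m'⟧)
            = (μ⟦t | m'⟧) * s₁.indicator (fun _ => (1:ℝ)) :=
          indicator_eq_mul_indicator_one s₁ _
        have e2 : μ[(μ⟦t | m'⟧) * s₁.indicator (fun _ => (1:ℝ)) | m']
            =ᵐ[μ] (μ⟦t | m'⟧) * (μ⟦s₁ | m'⟧) :=
          condExp_mul_of_stronglyMeasurable_left stronglyMeasurable_condExp
            (e1 ▸ hind_int) (integrable_indicator_one hs₁Ω)
        rw [e1]
        refine e2.trans ?_
        exact ((hprod s₁ t hs₁ ht).trans (Eventually.of_forall fun x => mul_comm _ _)).symm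
      calc ∫ x in s₁ ∩ s₂, (μ⟦t | m'⟧) x ∂μ
          = ∫ x in s₂ ∩ s₁, (μ⟦t | m'⟧) x ∂μ := by rw [Set.inter_comm]
        _ = ∫ x in s₂, s₁.indicator (μ⟦t | m'⟧) x ∂μ := (setIntegral_indicator hs₁Ω).symm
        _ = ∫ x in s₂, (μ[s₁.indicator (μ⟦t | m'⟧) | m']) x ∂μ :=
            (setIntegral_condExp hm' hind_int hs₂).symm
        _ = ∫ x in s₂, (μ⟦s₁ ∩ t | m'⟧) x ∂μ :=
            setIntegral_congr_ae hs₂Ω (hmul.mono fun x hx _ => hx)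
        _ = ∫ x in s₂, (s₁ ∩ t).indicator (fun _ => (1:ℝ)) x ∂μ :=
            setIntegral_condExp hm' (integrable_indicator_one (hs₁Ω.inter htΩ)) hs₂
        _ = ∫ x in s₂ ∩ (s₁ ∩ t), (1:ℝ) ∂μ := setIntegral_indicator (hs₁Ω.inter htΩ)
        _ = ∫ x in (s₁ ∩ s₂) ∩ t, (1:ℝ) ∂μ := by
            rw [show s₂ ∩ (s₁ ∩ t) = (s₁ ∩ s₂) ∩ t by ext x; simp; tauto]
        _ = ∫ x in s₁ ∩ s₂, t.indicator (fun _ => (1:ℝ)) x ∂μ :=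
            (setIntegral_indicator htΩ).symm
    · intro u hu hCu
      have huΩ : MeasurableSet[mΩ] u := hsup u hu
      have e1 := integral_add_compl huΩ (integrable_condExp (f := t.indicator (fun _ => (1:ℝ)))
        (m := m') (μ := μ))
      have e2 := integral_add_compl huΩ hf_int
      have e3 : ∫ x, (μ⟦t | m'⟧) x ∂μ = ∫ x, t.indicator (fun _ => (1:ℝ)) x ∂μ :=
        integral_condExp hm'
      linarith
    · intro fs hdisj hmeas hCs
      rw [integral_iUnion (fun i => hsup _ (hmeas i)) hdisj integrable_condExp.integrableOn,
        integral_iUnion (fun i => hsup _ (hmeas i)) hdisj hf_int.integrableOn]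
      exact tsum_congr hCs
  exact (ae_eq_condExp_of_forall_setIntegral_eq hsup hf_int
    (fun s _ _ => integrable_condExp.integrableOn)
    (fun s hs _ => hC s hs)
    ((stronglyMeasurable_condExp.mono (le_sup_right : m' ≤ m₁ ⊔ m')).aestronglyMeasurable)).symm

end Aux

/-- Let `T = A ∪ B ∪ C ∪ D` and `X = (X t : t ∈ T)` be a stochastic process. If
(1) `X_A` and `X_C` are conditionally independent given `X_B`, and
(2) there is `C' ⊆ C` such that `X_{A ∪ B ∪ C}` and `X_D` are conditionally independent
given `X_{C'}`, then `X_A` and `X_{C ∪ D}` are conditionally independent given `X_B`. -/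
theorem condIndep_union_of_condIndep {T Ω : Type*} [m : MeasurableSpace Ω]
    [StandardBorelSpace Ω] (μ : Measure Ω) [IsProbabilityMeasure μ]
    (X : T → Ω → ℝ) (hX : ∀ t, Measurable (X t))
    (A B C D : Set T) (hT : A ∪ B ∪ C ∪ D = Set.univ)
    (h1 : CondIndep (procSigma X B) (procSigma X A) (procSigma X C)
      (procSigma_le hX B) μ)
    (h2 : ∃ C' : Set T, C' ⊆ C ∧
      CondIndep (procSigma X C') (procSigma X (A ∪ B ∪ C)) (procSigma X D)
        (procSigma_le hX C') μ) :
    CondIndep (procSigma X B) (procSigma X A) (procSigma X (C ∪ D))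
      (procSigma_le hX B) μ := by
  obtain ⟨C', hC'C, h2⟩ := h2
  have hA := procSigma_le hX A
  have hB := procSigma_le hX B
  have hC := procSigma_le hX C
  have hD := procSigma_le hX D
  have hE := procSigma_le hX (A ∪ B ∪ C)
  have hCd := procSigma_le hX C'
  have hCD : procSigma X C ⊔ procSigma X D ≤ m := sup_le hC hD
  have hCB : procSigma X C ⊔ procSigma X B ≤ m := sup_le hC hB
  have hBE : procSigma X B ≤ procSigma X (A ∪ B ∪ C) :=
    procSigma_mono X (Set.subset_union_right.trans Set.subset_union_left)
  have hAE : procSigma X A ≤ procSigma X (A ∪ B ∪ C) :=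
    procSigma_mono X (Set.subset_union_left.trans Set.subset_union_left)
  have hCE : procSigma X C ≤ procSigma X (A ∪ B ∪ C) :=
    procSigma_mono X Set.subset_union_right
  have hC'E : procSigma X C' ≤ procSigma X (A ∪ B ∪ C) :=
    (procSigma_mono X hC'C).trans hCE
  -- key 1 : conditioning an `X_A`-event on `σ(X_C) ⊔ σ(X_B)` is the same as on `σ(X_B)`
  have key1 : ∀ a : Set Ω, MeasurableSet[procSigma X A] a →
      (μ⟦a | procSigma X C ⊔ procSigma X B⟧) =ᵐ[μ] μ⟦a | procSigma X B⟧ :=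
    fun a ha => condexp_indicator_sup_eq_of_condIndep hB hC hA h1.symm ha
  -- key 2 : conditioning an `X_D`-event on `σ(X_{A∪B∪C})` is the same as on `σ(X_{C'})`
  have key2 : ∀ d : Set Ω, MeasurableSet[procSigma X D] d →
      (μ⟦d | procSigma X (A ∪ B ∪ C)⟧) =ᵐ[μ] μ⟦d | procSigma X C'⟧ := by
    intro d hd
    have h := condexp_indicator_sup_eq_of_condIndep hCd hE hD h2 hd
    rwa [sup_of_le_left hC'E] at h
  -- the pointwise computation
  have heach : ∀ a c d : Set Ω, MeasurableSet[procSigma X A] a →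
      MeasurableSet[procSigma X C] c → MeasurableSet[procSigma X D] d →
      (μ⟦a ∩ (c ∩ d) | procSigma X B⟧)
        =ᵐ[μ] (μ⟦a | procSigma X B⟧) * (μ⟦c ∩ d | procSigma X B⟧) := by
    intro a c d ha hc hd
    have haΩ : MeasurableSet a := hA a ha
    have hcΩ : MeasurableSet c := hC c hc
    have hdΩ : MeasurableSet d := hD d hd
    have hfd_int : Integrable (d.indicator (fun _ => (1:ℝ))) μ := integrable_indicator_one hdΩ
    set g : Ω → ℝ := μ⟦d | procSigma X C'⟧ with hg
    -- conditional expectation of an indicator through `σ(X_{A∪B∪C})`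
    have hinner : ∀ s : Set Ω, MeasurableSet[procSigma X (A ∪ B ∪ C)] s →
        (μ⟦s ∩ d | procSigma X B⟧) =ᵐ[μ] μ[s.indicator g | procSigma X B] := by
      intro s hs
      have hsΩ : MeasurableSet s := hE s hs
      refine ((condExp_condExp_of_le hBE hE
        (f := (s ∩ d).indicator (fun ω => (1:ℝ)))).symm).trans ?_
      refine condExp_congr_ae ?_
      have e1 : (s ∩ d).indicator (fun ω => (1:ℝ)) = s.indicator (d.indicator (fun _ => (1:ℝ))) :=
        indicator_one_inter s d
      rw [e1]
      refine (condExp_indicator hfd_int hs).trans ?_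
      exact indicator_ae_congr s (key2 d hd)
    -- step A : rewrite the left-hand side
    have hac : MeasurableSet[procSigma X (A ∪ B ∪ C)] (a ∩ c) := (hAE a ha).inter (hCE c hc)
    have stepA : (μ⟦a ∩ (c ∩ d) | procSigma X B⟧)
        =ᵐ[μ] μ[(a ∩ c).indicator g | procSigma X B] := by
      rw [← Set.inter_assoc]
      exact hinner (a ∩ c) hac
    -- step E : rewrite the second factor of the right-hand side
    have stepE : (μ⟦c ∩ d | procSigma X B⟧) =ᵐ[μ] μ[c.indicator g | procSigma X B] :=
      hinner c (hCE c hc)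
    -- rewrite the product as (c.indicator g) * 1_a
    have e4 : (a ∩ c).indicator g = (c.indicator g) * a.indicator (fun _ => (1:ℝ)) := by
      rw [← Set.indicator_indicator]
      exact indicator_eq_mul_indicator_one a _
    have hint_prod : Integrable ((c.indicator g) * a.indicator (fun _ => (1:ℝ))) μ := by
      rw [← e4]
      exact integrable_condExp.indicator (haΩ.inter hcΩ)
    have h_sm : StronglyMeasurable[procSigma X C ⊔ procSigma X B] (c.indicator g) :=
      (stronglyMeasurable_condExp.mono
        ((procSigma_mono X hC'C).trans le_sup_left)).indicator
        ((le_sup_left : procSigma X C ≤ procSigma X C ⊔ procSigma X B) c hc)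
    -- step B : tower through `σ(X_C) ⊔ σ(X_B)` and pull out `c.indicator g`
    have stepB : μ[(a ∩ c).indicator g | procSigma X B]
        =ᵐ[μ] μ[(c.indicator g) * (μ⟦a | procSigma X B⟧) | procSigma X B] := by
      rw [e4]
      refine ((condExp_condExp_of_le
        (le_sup_right : procSigma X B ≤ procSigma X C ⊔ procSigma X B) hCB
        (f := (c.indicator g) * a.indicator (fun ω => (1:ℝ)))).symm).trans ?_
      refine condExp_congr_ae ?_
      refine (condExp_mul_of_stronglyMeasurable_left h_sm hint_prod
        (integrable_indicator_one haΩ)).trans ?_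
      exact Filter.EventuallyEq.mul (Filter.EventuallyEq.refl _ _) (key1 a ha)
    -- step C : pull out `μ⟦a | σ(X_B)⟧`
    have hint_c : Integrable (c.indicator g) μ := integrable_condExp.indicator hcΩ
    have hint2 : Integrable ((μ⟦a | procSigma X B⟧) * c.indicator g) μ :=
      Integrable.bdd_mul hint_c
        ((stronglyMeasurable_condExp.mono hB).aestronglyMeasurable)
        (norm_condexp_indicator_one_le_one hB haΩ)
    have stepC : μ[(c.indicator g) * (μ⟦a | procSigma X B⟧) | procSigma X B]
        =ᵐ[μ] (μ⟦a | procSigma X B⟧) * μ[c.indicator g | procSigma X B] := by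
      rw [mul_comm]
      exact condExp_mul_of_stronglyMeasurable_left stronglyMeasurable_condExp hint2 hint_c
    refine ((stepA.trans stepB).trans stepC).trans ?_
    exact Filter.EventuallyEq.mul (Filter.EventuallyEq.refl _ _) stepE.symm
  -- conclude via the π-system argument
  rw [procSigma_union X C D]
  refine CondIndepSets.condIndep (p1 := {s | MeasurableSet[procSigma X A] s})
    (p2 := piInterSets (procSigma X C) (procSigma X D)) hA hCD
    (@MeasurableSpace.isPiSystem_measurableSet Ω (procSigma X A))
    (isPiSystem_piInterSets _ _)
    (@MeasurableSpace.generateFrom_measurableSet Ω (procSigma X A)).symm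
    (sup_eq_generateFrom_piInterSets _ _) ?_
  have hs2 : ∀ s ∈ piInterSets (procSigma X C) (procSigma X D), MeasurableSet s := by
    rintro s ⟨c, d, hc, hd, rfl⟩
    exact (hC c hc).inter (hD d hd)
  refine (condIndepSets_iff (m' := procSigma X B) (hm' := procSigma_le hX B) _ _
    (fun s hs => hA s hs) hs2 μ).mpr ?_
  rintro t1 t2 ht1 ⟨c, d, hc, hd, rfl⟩
  exact heach t1 c d ht1 hc hd
end

section
/- Let F₁, F₂, G be sub-σ-algebras of F on a probability space, with F₁ and F₂ conditionally independent given G. If F ⊇ G is any σ-algebra with G ⊆ F ⊆ σ(F₂ ∪ G), then F₁ and F₂ are conditionally independent given F. -/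
open MeasureTheory ProbabilityTheory Set

lemma sup_eq_generateFrom_inter' {Ω : Type*} (F₂ G : MeasurableSpace Ω) :
    F₂ ⊔ G = MeasurableSpace.generateFrom
      {u | ∃ t e, MeasurableSet[F₂] t ∧ MeasurableSet[G] e ∧ u = t ∩ e} := by
  apply le_antisymm
  · refine sup_le ?_ ?_
    · intro t ht
      exact MeasurableSpace.measurableSet_generateFrom
        ⟨t, univ, ht, MeasurableSet.univ, (inter_univ t).symm⟩
    · intro e he
      exact MeasurableSpace.measurableSet_generateFrom
        ⟨univ, e, MeasurableSet.univ, he, (univ_inter e).symm⟩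
  · refine MeasurableSpace.generateFrom_le ?_
    rintro u ⟨t, e, ht, he, rfl⟩
    exact MeasurableSet.inter ((le_sup_left : F₂ ≤ F₂ ⊔ G) _ ht)
      ((le_sup_right : G ≤ F₂ ⊔ G) _ he)

lemma key_setIntegral {Ω : Type*} [m : MeasurableSpace Ω] [StandardBorelSpace Ω]
    (μ : Measure Ω) [IsProbabilityMeasure μ]
    {F₁ F₂ G : MeasurableSpace Ω}
    (hF₁ : F₁ ≤ m) (hF₂ : F₂ ≤ m) (hG : G ≤ m)
    (hCI : CondIndep G F₁ F₂ hG μ) {s : Set Ω} (hs : MeasurableSet[F₁] s) :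
    ∀ u, MeasurableSet[F₂ ⊔ G] u →
      ∫ x in u, (μ⟦s | G⟧) x ∂μ = ∫ x in u, s.indicator (fun _ => (1:ℝ)) x ∂μ := by
  letI : MeasurableSpace Ω := m
  have hCI' := (condIndep_iff G F₁ F₂ hG hF₁ hF₂ μ).mp hCI
  have hsm : MeasurableSet[m] s := hF₁ _ hs
  have int_s : Integrable (s.indicator (fun _ => (1:ℝ))) μ :=
    (integrable_const (1:ℝ) (μ := μ)).indicator hsm
  refine MeasurableSpace.induction_on_inter (m := F₂ ⊔ G)
    (C := fun u _ => ∫ x in u, (μ⟦s | G⟧) x ∂μ = ∫ x in u, s.indicator (fun _ => (1:ℝ)) x ∂μ)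
    (sup_eq_generateFrom_inter' F₂ G) ?_ (by simp) ?_ ?_ ?_
  · -- π-system
    rintro u ⟨t, e, ht, he, rfl⟩ u' ⟨t', e', ht', he', rfl⟩ -
    exact ⟨t ∩ t', e ∩ e', ht.inter ht', he.inter he', by ext x; simp; tauto⟩
  · -- basic sets
    rintro u ⟨t, e, ht, he, rfl⟩
    have hmt : MeasurableSet[m] t := hF₂ _ ht
    have hme : MeasurableSet[m] e := hG _ he
    have int_t : Integrable (t.indicator (fun _ => (1:ℝ))) μ :=
      (integrable_const (1:ℝ) (μ := μ)).indicator hmt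
    have int_st : Integrable ((s ∩ t).indicator (fun _ => (1:ℝ))) μ :=
      (integrable_const (1:ℝ) (μ := μ)).indicator (hsm.inter hmt)
    have int_prod : Integrable (fun x => (μ⟦s | G⟧) x * t.indicator (fun _ => (1:ℝ)) x) μ := by
      refine (((integrable_condExp (μ := μ) (m := G) (f := s.indicator (fun _ => (1:ℝ))))).indicator hmt).congr ?_
      refine Filter.Eventually.of_forall fun x => ?_
      by_cases hx : x ∈ t <;> simp [Set.indicator_apply, hx]
    have h1 : ∫ x in t ∩ e, (μ⟦s | G⟧) x ∂μ
        = ∫ x in e, (fun x => (μ⟦s | G⟧) x * t.indicator (fun _ => (1:ℝ)) x) x ∂μ := by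
      rw [inter_comm, ← setIntegral_indicator (μ := μ) hmt]
      refine integral_congr_ae (Filter.Eventually.of_forall fun x => ?_)
      by_cases hx : x ∈ t <;> simp [Set.indicator_apply, hx]
    have h2 : μ[(fun x => (μ⟦s | G⟧) x * t.indicator (fun _ => (1:ℝ)) x) | G]
        =ᵐ[μ] μ⟦s ∩ t | G⟧ := by
      have hpull := condExp_mul_of_stronglyMeasurable_left (m := G) (μ := μ)
        stronglyMeasurable_condExp int_prod int_t
      exact hpull.trans (hCI' s t hs ht).symm
    calc ∫ x in t ∩ e, (μ⟦s | G⟧) x ∂μ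
        = ∫ x in e, (fun x => (μ⟦s | G⟧) x * t.indicator (fun _ => (1:ℝ)) x) x ∂μ := h1
      _ = ∫ x in e, (μ[(fun x => (μ⟦s | G⟧) x * t.indicator (fun _ => (1:ℝ)) x) | G]) x ∂μ :=
          (setIntegral_condExp hG int_prod he).symm
      _ = ∫ x in e, (μ⟦s ∩ t | G⟧) x ∂μ :=
          integral_congr_ae (ae_restrict_of_ae h2)
      _ = ∫ x in e, (s ∩ t).indicator (fun _ => (1:ℝ)) x ∂μ :=
          setIntegral_condExp hG int_st he
      _ = ∫ x in e ∩ (s ∩ t), (1:ℝ) ∂μ := setIntegral_indicator (μ := μ) (hsm.inter hmt)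
      _ = ∫ x in (t ∩ e) ∩ s, (1:ℝ) ∂μ := by
          rw [show e ∩ (s ∩ t) = (t ∩ e) ∩ s by ext x;simp only [Set.mem_inter_iff]; tauto]
      _ = ∫ x in t ∩ e, s.indicator (fun _ => (1:ℝ)) x ∂μ := (setIntegral_indicator (μ := μ) hsm).symm
  · -- complements
    intro u hu hC
    have hum : MeasurableSet[m] u := (sup_le hF₂ hG) _ hu
    have h1 := integral_add_compl (μ := μ) hum (integrable_condExp (f := s.indicator (fun _ => (1:ℝ)))
      (m := G) (μ := μ))
    have h2 := integral_add_compl (μ := μ) hum int_s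
    have h3 : ∫ x, (μ⟦s | G⟧) x ∂μ = ∫ x, s.indicator (fun _ => (1:ℝ)) x ∂μ :=
      integral_condExp hG
    linarith
  · -- disjoint unions
    intro f hdisj hmeas hC
    have hfm : ∀ i, MeasurableSet[m] (f i) := fun i => (sup_le hF₂ hG) _ (hmeas i)
    rw [integral_iUnion (μ := μ) hfm hdisj integrable_condExp.integrableOn,
      integral_iUnion (μ := μ) hfm hdisj int_s.integrableOn]
    exact tsum_congr hC

/-- If `F₁` and `F₂` are conditionally independent given `G`, and `F` is a σ-algebra with
`G ⊆ F ⊆ σ(F₂ ∪ G)`, then `F₁` and `F₂` are conditionally independent given `F`. -/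
theorem condIndep_of_le_sup {Ω : Type*} [m : MeasurableSpace Ω] [StandardBorelSpace Ω]
    (μ : Measure Ω) [IsProbabilityMeasure μ]
    (F₁ F₂ G F : MeasurableSpace Ω)
    (hF₁ : F₁ ≤ m) (hF₂ : F₂ ≤ m) (hG : G ≤ m) (hF : F ≤ m)
    (hCI : CondIndep G F₁ F₂ hG μ)
    (hGF : G ≤ F) (hFle : F ≤ F₂ ⊔ G) :
    CondIndep F F₁ F₂ hF μ := by
  letI : MeasurableSpace Ω := m
  rw [condIndep_iff F F₁ F₂ hF hF₁ hF₂ μ]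
  intro s t hs ht
  have key := key_setIntegral μ hF₁ hF₂ hG hCI hs
  have hsm : MeasurableSet[m] s := hF₁ _ hs
  have htm : MeasurableSet[m] t := hF₂ _ ht
  have int_s : Integrable (s.indicator (fun _ => (1:ℝ))) μ :=
    (integrable_const (1:ℝ) (μ := μ)).indicator hsm
  have int_t : Integrable (t.indicator (fun _ => (1:ℝ))) μ :=
    (integrable_const (1:ℝ) (μ := μ)).indicator htm
  have int_st : Integrable ((s ∩ t).indicator (fun _ => (1:ℝ))) μ :=
    (integrable_const (1:ℝ) (μ := μ)).indicator (hsm.inter htm)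
  -- Step A : μ⟦s|G⟧ = μ⟦s|F⟧ a.e.
  have hsF : μ⟦s | G⟧ =ᵐ[μ] μ⟦s | F⟧ := by
    refine ae_eq_condExp_of_forall_setIntegral_eq hF int_s
      (fun u _ _ => integrable_condExp.integrableOn)
      (fun u hu _ => key u (hFle _ hu)) ?_
    exact (stronglyMeasurable_condExp.mono hGF).aestronglyMeasurable
  -- a.e. bound on μ⟦s|G⟧
  have hbd : ∀ᵐ x ∂μ, ‖(μ⟦s | G⟧) x‖ ≤ (1:ℝ) := by
    have : ∀ᵐ x ∂μ, |s.indicator (fun _ => (1:ℝ)) x| ≤ ((1:NNReal) : ℝ) := by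
      refine Filter.Eventually.of_forall fun x => ?_
      by_cases hx : x ∈ s <;> simp [Set.indicator_apply, hx]
    have := ae_bdd_condExp_of_ae_bdd (m := G) this
    filter_upwards [this] with x hx
    simpa using hx
  -- Step B : μ⟦s|G⟧ * μ⟦t|F⟧ = μ⟦s∩t|F⟧ a.e.
  have hB : (fun x => (μ⟦s | G⟧) x * (μ⟦t | F⟧) x) =ᵐ[μ] μ⟦s ∩ t | F⟧ := by
    have hsmF : StronglyMeasurable[F] (μ⟦s | G⟧) := stronglyMeasurable_condExp.mono hGF
    have int_prod : Integrable (fun x => (μ⟦s | G⟧) x * (μ⟦t | F⟧) x) μ :=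
      Integrable.bdd_mul integrable_condExp
        ((hsmF.mono hF).aestronglyMeasurable) hbd
    refine ae_eq_condExp_of_forall_setIntegral_eq hF int_st
      (fun u _ _ => int_prod.integrableOn) (fun u hu _ => ?_) ?_
    · -- ∫_u μ⟦s|G⟧ μ⟦t|F⟧ = ∫_u 1_{s∩t}
      set h : Ω → ℝ := u.indicator (μ⟦s | G⟧) with hh
      have humF : MeasurableSet[F] u := hu
      have hum : MeasurableSet[m] u := hF _ hu
      have h_sm : StronglyMeasurable[F] h := hsmF.indicator hu
      have int_h : Integrable h μ := (integrable_condExp (μ := μ) (m := G) (f := s.indicator (fun _ => (1:ℝ)))).indicator hum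
      have int_ht : Integrable (fun x => h x * t.indicator (fun _ => (1:ℝ)) x) μ := by
        refine (int_h.indicator htm).congr ?_
        refine Filter.Eventually.of_forall fun x => ?_
        by_cases hx : x ∈ t <;> simp [Set.indicator_apply, hx]
      have hpull : μ[(fun x => h x * t.indicator (fun _ => (1:ℝ)) x) | F]
          =ᵐ[μ] fun x => h x * (μ⟦t | F⟧) x :=
        condExp_mul_of_stronglyMeasurable_left (m := F) h_sm int_ht int_t
      have e1 : ∫ x in u, (μ⟦s | G⟧) x * (μ⟦t | F⟧) x ∂μ
          = ∫ x, h x * (μ⟦t | F⟧) x ∂μ := by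
        rw [← integral_indicator (μ := μ) hum]
        refine integral_congr_ae (Filter.Eventually.of_forall fun x => ?_)
        by_cases hx : x ∈ u <;> simp [hh, Set.indicator_apply, hx]
      have e2 : ∫ x, h x * (μ⟦t | F⟧) x ∂μ
          = ∫ x, h x * t.indicator (fun _ => (1:ℝ)) x ∂μ := by
        rw [← integral_congr_ae hpull, integral_condExp hF]
      have e3 : ∫ x, h x * t.indicator (fun _ => (1:ℝ)) x ∂μ
          = ∫ x in u ∩ t, (μ⟦s | G⟧) x ∂μ := by
        rw [← integral_indicator (μ := μ) (hum.inter htm)]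
        refine integral_congr_ae (Filter.Eventually.of_forall fun x => ?_)
        by_cases hxu : x ∈ u <;> by_cases hxt : x ∈ t <;>
          simp [hh, Set.indicator_apply, hxu, hxt]
      have hut : MeasurableSet[F₂ ⊔ G] (u ∩ t) :=
        MeasurableSet.inter (hFle _ hu) ((le_sup_left : F₂ ≤ F₂ ⊔ G) _ ht)
      have e4 : ∫ x in u ∩ t, (μ⟦s | G⟧) x ∂μ
          = ∫ x in u, (s ∩ t).indicator (fun _ => (1:ℝ)) x ∂μ := by
        rw [key _ hut, setIntegral_indicator (μ := μ) hsm, setIntegral_indicator (μ := μ) (hsm.inter htm),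
          show (u ∩ t) ∩ s = u ∩ (s ∩ t) by ext x; simp only [Set.mem_inter_iff]; tauto]
      rw [e1, e2, e3, e4]
    · exact (hsmF.mul stronglyMeasurable_condExp).aestronglyMeasurable
  calc μ⟦s ∩ t | F⟧ =ᵐ[μ] fun x => (μ⟦s | G⟧) x * (μ⟦t | F⟧) x := hB.symm
    _ =ᵐ[μ] μ⟦s | F⟧ * μ⟦t | F⟧ := by
        filter_upwards [hsF] with x hx
        simp [hx]
end

section
/- Let f : ℝ → ℝ be continuous and suppose there exist C > 0 and a locally integrable g : ℝ⁺ → ℝ⁺ with |f(x)|² ≤ C + ∫₀^{|x|} g(y) dy for all x, and ∫₀^∞ g(y)e^{−y²/(2τ)} dy < ∞ for some τ > 0. Then there exists M > 0 such that E[|f(S_{⌊nt⌋}/√n)|²] < M for all t ≤ τ and all n, and moreover ∫ |f(x)|·e^{−x²/(2τ)} dx < ∞. -/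
open MeasureTheory ProbabilityTheory
open scoped ENNReal

private lemma sqrt_add_le' {a b : ℝ} (ha : 0 ≤ a) (hb : 0 ≤ b) :
    Real.sqrt (a + b) ≤ Real.sqrt a + Real.sqrt b := by
  rw [show Real.sqrt a + Real.sqrt b
      = Real.sqrt ((Real.sqrt a + Real.sqrt b) ^ 2) by
        rw [Real.sqrt_sq (by positivity)]]
  apply Real.sqrt_le_sqrt
  nlinarith [Real.sq_sqrt ha, Real.sq_sqrt hb, Real.sqrt_nonneg a, Real.sqrt_nonneg b]

set_option maxHeartbeats 1600000 in
/-- Let `f : ℝ → ℝ` be continuous and suppose there are `C > 0` and a nonnegative locally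
integrable `g` on `ℝ⁺` with `|f x|² ≤ C + ∫₀^{|x|} g` for all `x`, and
`∫₀^∞ g y e^{-y²/(2τ)} dy < ∞` for some `τ > 0`. Then, for the simple symmetric random
walk `S`, there is `M > 0` with `E[|f (S_{⌊nt⌋}/√n)|²] < M` for all `t ≤ τ` and all `n`,
and moreover `∫ |f x| e^{-x²/(2τ)} dx < ∞`. -/
theorem random_walk_second_moment_bound {Ω : Type*} [MeasureSpace Ω]
    [IsProbabilityMeasure (ℙ : Measure Ω)]
    (ε : ℕ → Ω → ℝ) (hmeas : ∀ i, Measurable (ε i))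
    (hindep : iIndepFun ε ℙ)
    (h1 : ∀ i, ℙ {ω | ε i ω = 1} = 1 / 2)
    (h2 : ∀ i, ℙ {ω | ε i ω = -1} = 1 / 2)
    (f : ℝ → ℝ) (hf : Continuous f)
    (C : ℝ) (hC : 0 < C)
    (g : ℝ → ℝ) (hg0 : ∀ y, 0 ≤ g y) (hgloc : LocallyIntegrableOn g (Set.Ici 0))
    (hfg : ∀ x : ℝ, |f x| ^ 2 ≤ C + ∫ y in (0 : ℝ)..|x|, g y)
    (τ : ℝ) (hτ : 0 < τ)
    (hgint : IntegrableOn (fun y => g y * Real.exp (-y ^ 2 / (2 * τ))) (Set.Ioi 0)) :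
    (∃ M > (0 : ℝ), ∀ t : ℝ, t ≤ τ → ∀ n : ℕ,
      ∫ ω, |f ((∑ i ∈ Finset.range ⌊(n : ℝ) * t⌋₊, ε i ω) / Real.sqrt n)| ^ 2 ∂ℙ < M) ∧
    Integrable (fun x => |f x| * Real.exp (-x ^ 2 / (2 * τ))) := by
  classical
  set K : ℝ := ∫ y in Set.Ioi (0:ℝ), g y * Real.exp (-y ^ 2 / (2 * τ)) with hK
  have hK0 : 0 ≤ K :=
    setIntegral_nonneg measurableSet_Ioi fun y _ => mul_nonneg (hg0 y) (Real.exp_nonneg _)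
  -- each ε i is a.s. ±1
  have haemem : ∀ i, ∀ᵐ ω ∂ℙ, ε i ω = 1 ∨ ε i ω = -1 := by
    intro i
    have hA : MeasurableSet {ω | ε i ω = 1} := hmeas i (measurableSet_singleton 1)
    have hB : MeasurableSet {ω | ε i ω = -1} := hmeas i (measurableSet_singleton (-1))
    have hdisj : Disjoint {ω | ε i ω = 1} {ω | ε i ω = -1} := by
      rw [Set.disjoint_left]
      intro ω hω1 hω2
      simp only [Set.mem_setOf_eq] at hω1 hω2
      rw [hω1] at hω2; norm_num at hω2
    have hU : ℙ ({ω | ε i ω = 1} ∪ {ω | ε i ω = -1}) = 1 := by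
      rw [measure_union hdisj hB, h1, h2, ENNReal.add_halves]
    have hcompl : ℙ (({ω | ε i ω = 1} ∪ {ω | ε i ω = -1})ᶜ) = 0 := by
      rw [measure_compl (hA.union hB) (measure_ne_top _ _), hU, measure_univ, tsub_self]
    filter_upwards [measure_eq_zero_iff_ae_notMem.mp hcompl] with ω hω
    simpa [Set.mem_union, Set.mem_setOf_eq] using not_not.mp hω
  -- mgf of each step
  have hmgf_eps : ∀ i, ∀ c : ℝ, mgf (ε i) ℙ c = Real.cosh c := by
    intro i c
    have hA : MeasurableSet {ω | ε i ω = 1} := hmeas i (measurableSet_singleton 1)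
    have hB : MeasurableSet {ω | ε i ω = -1} := hmeas i (measurableSet_singleton (-1))
    have heq : (fun ω => Real.exp (c * ε i ω)) =ᵐ[ℙ]
        fun ω => Set.indicator {ω | ε i ω = 1} (fun _ => Real.exp c) ω
          + Set.indicator {ω | ε i ω = -1} (fun _ => Real.exp (-c)) ω := by
      filter_upwards [haemem i] with ω hω
      rcases hω with h | h
      · have h' : ω ∉ {ω | ε i ω = -1} := by simp only [Set.mem_setOf_eq, h]; norm_num
        simp [Set.indicator_of_mem (show ω ∈ {ω | ε i ω = 1} from h),
          Set.indicator_of_notMem h', h]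
      · have h' : ω ∉ {ω | ε i ω = 1} := by simp only [Set.mem_setOf_eq, h]; norm_num
        simp [Set.indicator_of_mem (show ω ∈ {ω | ε i ω = -1} from h),
          Set.indicator_of_notMem h', h]
    rw [mgf, integral_congr_ae heq, integral_add
      ((integrable_const _).indicator hA) ((integrable_const _).indicator hB),
      integral_indicator_const _ hA, integral_indicator_const _ hB, measureReal_def,
      measureReal_def, h1, h2, Real.cosh_eq]
    simp only [smul_eq_mul]
    rw [ENNReal.toReal_div]
    norm_num
    ring
  -- a.s. bound on partial sums
  have hSbd : ∀ m : ℕ, ∀ᵐ ω ∂ℙ, |∑ i ∈ Finset.range m, ε i ω| ≤ m := by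
    intro m
    filter_upwards [MeasureTheory.ae_all_iff.2 haemem] with ω hω
    calc |∑ i ∈ Finset.range m, ε i ω| ≤ ∑ i ∈ Finset.range m, |ε i ω| :=
          Finset.abs_sum_le_sum_abs _ _
      _ = ∑ _i ∈ Finset.range m, (1:ℝ) := by
          refine Finset.sum_congr rfl fun i _ => ?_
          rcases hω i with h | h <;> simp [h]
      _ = m := by simp
  -- integrability of exp(c * S_m)
  have hSint : ∀ m : ℕ, ∀ c : ℝ,
      Integrable (fun ω => Real.exp (c * ∑ i ∈ Finset.range m, ε i ω)) ℙ := by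
    intro m c
    refine Integrable.mono' (integrable_const (Real.exp (|c| * m)))
      ((((Finset.range m).measurable_sum fun i _ => hmeas i).const_mul c).exp).aestronglyMeasurable
      ?_
    filter_upwards [hSbd m] with ω hω
    rw [Real.norm_eq_abs, Real.abs_exp]
    refine Real.exp_le_exp.2 ?_
    calc c * ∑ i ∈ Finset.range m, ε i ω ≤ |c * ∑ i ∈ Finset.range m, ε i ω| := le_abs_self _
      _ = |c| * |∑ i ∈ Finset.range m, ε i ω| := abs_mul _ _
      _ ≤ |c| * m := mul_le_mul_of_nonneg_left hω (abs_nonneg c)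
  -- mgf of partial sums
  have hmgfS : ∀ m : ℕ, ∀ c : ℝ,
      mgf (fun ω => ∑ i ∈ Finset.range m, ε i ω) ℙ c = Real.cosh c ^ m := by
    intro m c
    have h0 : (fun ω => ∑ i ∈ Finset.range m, ε i ω) = ∑ i ∈ Finset.range m, ε i := by
      funext ω; simp
    rw [h0, hindep.mgf_sum hmeas (Finset.range m)]
    rw [Finset.prod_congr rfl fun i _ => hmgf_eps i c, Finset.prod_const, Finset.card_range]
  -- Chernoff bound
  have chern : ∀ m : ℕ, 1 ≤ m → ∀ a : ℝ, 0 < a → ∀ X : Ω → ℝ,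
      (∀ c : ℝ, Integrable (fun ω => Real.exp (c * X ω)) ℙ) →
      (∀ c : ℝ, mgf X ℙ c = Real.cosh c ^ m) →
      (ℙ {ω | a ≤ X ω}).toReal ≤ Real.exp (-(a^2) / (2*m)) := by
    intro m hm a ha X hint hmgf
    have hm0 : (0:ℝ) < m := by exact_mod_cast hm
    set l : ℝ := a / m with hl
    have hl0 : 0 ≤ l := le_of_lt (div_pos ha hm0)
    calc (ℙ {ω | a ≤ X ω}).toReal ≤ Real.exp (-l * a) * mgf X ℙ l :=
          measure_ge_le_exp_mul_mgf a hl0 (hint l)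
      _ = Real.exp (-l * a) * Real.cosh l ^ m := by rw [hmgf]
      _ ≤ Real.exp (-l * a) * Real.exp (l^2/2) ^ m :=
          mul_le_mul_of_nonneg_left
            (pow_le_pow_left₀ (Real.cosh_pos l).le (Real.cosh_le_exp_half_sq l) m)
            (Real.exp_nonneg _)
      _ = Real.exp (-l * a + m * (l^2/2)) := by
          rw [← Real.exp_nat_mul, ← Real.exp_add]
      _ = Real.exp (-(a^2) / (2*m)) := by
          congr 1
          rw [hl]
          field_simp
          ring
  -- uniform tail bound
  have tail : ∀ t : ℝ, t ≤ τ → ∀ n : ℕ, ∀ y : ℝ, 0 < y →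
      ℙ {ω | y ≤ |(∑ i ∈ Finset.range ⌊(n : ℝ) * t⌋₊, ε i ω) / Real.sqrt n|}
        ≤ ENNReal.ofReal (2 * Real.exp (-y ^ 2 / (2 * τ))) := by
    intro t ht n y hy
    set m : ℕ := ⌊(n : ℝ) * t⌋₊ with hm
    by_cases hm0 : m = 0
    · have : {ω : Ω | y ≤ |(∑ i ∈ Finset.range m, ε i ω) / Real.sqrt n|} = ∅ := by
        ext ω
        simp [hm0, not_le, hy]
      rw [this, measure_empty]
      exact zero_le
    · have hm1 : 1 ≤ m := Nat.one_le_iff_ne_zero.2 hm0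
      have hnt : 0 ≤ (n : ℝ) * t := by
        by_contra h
        exact hm0 (hm ▸ Nat.floor_of_nonpos (le_of_not_ge h))
      have hmnt : (m : ℝ) ≤ (n : ℝ) * t := Nat.floor_le hnt
      have hn0 : 0 < n := by
        rcases Nat.eq_zero_or_pos n with h | h
        · exfalso; apply hm0; rw [hm, h]; simp
        · exact h
      have hnR : (0:ℝ) < n := by exact_mod_cast hn0
      have hmR : (0:ℝ) < m := by exact_mod_cast hm1
      have hmτ : (m : ℝ) ≤ (n : ℝ) * τ := le_trans hmnt (by nlinarith)
      have hsq : (0:ℝ) < Real.sqrt n := Real.sqrt_pos.2 hnR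
      set a : ℝ := y * Real.sqrt n with haa
      have ha : 0 < a := mul_pos hy hsq
      set S : Ω → ℝ := fun ω => ∑ i ∈ Finset.range m, ε i ω with hS
      -- exponent comparison
      have hexp : Real.exp (-(a^2) / (2*m)) ≤ Real.exp (-y ^ 2 / (2 * τ)) := by
        apply Real.exp_le_exp.2
        have ha2 : a ^ 2 = y ^ 2 * n := by
          rw [haa, mul_pow, Real.sq_sqrt hnR.le]
        rw [ha2, div_le_div_iff₀ (by positivity) (by positivity), neg_mul, neg_mul, neg_le_neg_iff]
        nlinarith [sq_nonneg y]
      have hup : (ℙ {ω | a ≤ S ω}).toReal ≤ Real.exp (-(a^2) / (2*m)) :=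
        chern m hm1 a ha S (hSint m) (hmgfS m)
      have hdown : (ℙ {ω | a ≤ -S ω}).toReal ≤ Real.exp (-(a^2) / (2*m)) := by
        refine chern m hm1 a ha (fun ω => -S ω) (fun c => ?_) (fun c => ?_)
        · simpa only [mul_neg, neg_mul] using hSint m (-c)
        · have heq : mgf (fun ω => -S ω) ℙ c = mgf S ℙ (-c) := by
            simp only [mgf, mul_neg, neg_mul]
          rw [heq, hmgfS m (-c), Real.cosh_neg]
      have hsub : {ω : Ω | y ≤ |S ω / Real.sqrt n|} ⊆ {ω | a ≤ S ω} ∪ {ω | a ≤ -S ω} := by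
        intro ω hω
        simp only [Set.mem_setOf_eq] at hω
        have : a ≤ |S ω| := by
          rw [abs_div, abs_of_pos hsq] at hω
          rw [haa]
          calc y * Real.sqrt n ≤ |S ω| / Real.sqrt n * Real.sqrt n := by gcongr
            _ = |S ω| := div_mul_cancel₀ _ hsq.ne'
        rcases abs_cases (S ω) with ⟨h, _⟩ | ⟨h, _⟩
        · left; rw [Set.mem_setOf_eq]; linarith [this]
        · right; rw [Set.mem_setOf_eq]; linarith [this]
      calc ℙ {ω | y ≤ |S ω / Real.sqrt n|} ≤ ℙ ({ω | a ≤ S ω} ∪ {ω | a ≤ -S ω}) :=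
            measure_mono hsub
        _ ≤ ℙ {ω | a ≤ S ω} + ℙ {ω | a ≤ -S ω} := measure_union_le _ _
        _ ≤ ENNReal.ofReal (Real.exp (-y ^ 2 / (2*τ))) + ENNReal.ofReal (Real.exp (-y ^ 2 / (2*τ))) := by
            gcongr
            · rw [← ENNReal.ofReal_toReal (measure_ne_top ℙ _)]
              exact ENNReal.ofReal_le_ofReal (le_trans hup hexp)
            · rw [← ENNReal.ofReal_toReal (measure_ne_top ℙ _)]
              exact ENNReal.ofReal_le_ofReal (le_trans hdown hexp)
        _ = ENNReal.ofReal (2 * Real.exp (-y ^ 2 / (2 * τ))) := by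
            rw [← ENNReal.ofReal_add (Real.exp_nonneg _) (Real.exp_nonneg _)]
            congr 1
            ring
  -- interval integrability of g
  have g_intble : ∀ r : ℝ, 0 < r → IntervalIntegrable g volume 0 r := by
    intro r hr
    have : IntegrableOn g (Set.Icc 0 r) volume :=
      hgloc.integrableOn_compact_subset Set.Icc_subset_Ici_self isCompact_Icc
    exact (intervalIntegrable_iff_integrableOn_Icc_of_le hr.le).2 this
  constructor
  · -- main second moment bound
    refine ⟨C + 2*K + 1, by positivity, fun t ht n => ?_⟩
    set m : ℕ := ⌊(n : ℝ) * t⌋₊ with hm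
    set X : Ω → ℝ := fun ω => (∑ i ∈ Finset.range m, ε i ω) / Real.sqrt n with hX
    have hXmeas : Measurable X :=
      (((Finset.range m).measurable_sum fun i _ => hmeas i).div_const _)
    have layer : ∫⁻ ω, ENNReal.ofReal (∫ y in (0:ℝ)..|X ω|, g y) ∂ℙ
        = ∫⁻ y in Set.Ioi (0:ℝ), ℙ {ω | y ≤ |X ω|} * ENNReal.ofReal (g y) :=
      lintegral_comp_eq_lintegral_meas_le_mul ℙ
        (Filter.Eventually.of_forall fun ω => abs_nonneg _)
        hXmeas.abs.aemeasurable g_intble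
        (Filter.Eventually.of_forall fun y => hg0 y)
    have key : ∫⁻ ω, ENNReal.ofReal (|f (X ω)| ^ 2) ∂ℙ ≤ ENNReal.ofReal (C + 2*K) := by
      calc ∫⁻ ω, ENNReal.ofReal (|f (X ω)| ^ 2) ∂ℙ
          ≤ ∫⁻ ω, (ENNReal.ofReal C + ENNReal.ofReal (∫ y in (0:ℝ)..|X ω|, g y)) ∂ℙ := by
            refine lintegral_mono fun ω => ?_
            exact le_trans (ENNReal.ofReal_le_ofReal (hfg (X ω))) ENNReal.ofReal_add_le
        _ = ENNReal.ofReal C + ∫⁻ ω, ENNReal.ofReal (∫ y in (0:ℝ)..|X ω|, g y) ∂ℙ := by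
            rw [lintegral_add_left measurable_const, lintegral_const, measure_univ, mul_one]
        _ = ENNReal.ofReal C + ∫⁻ y in Set.Ioi (0:ℝ), ℙ {ω | y ≤ |X ω|} * ENNReal.ofReal (g y) := by
            rw [layer]
        _ ≤ ENNReal.ofReal C + ∫⁻ y in Set.Ioi (0:ℝ),
              (2 : ℝ≥0∞) * ENNReal.ofReal (g y * Real.exp (-y ^ 2 / (2 * τ))) := by
            refine add_le_add (le_refl _) (lintegral_mono_ae ?_)
            refine (ae_restrict_iff' measurableSet_Ioi).2 (Filter.Eventually.of_forall fun y hy => ?_)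
            calc ℙ {ω | y ≤ |X ω|} * ENNReal.ofReal (g y)
                ≤ ENNReal.ofReal (2 * Real.exp (-y ^ 2 / (2 * τ))) * ENNReal.ofReal (g y) := by
                  gcongr
                  exact tail t ht n y hy
              _ = (2 : ℝ≥0∞) * ENNReal.ofReal (g y * Real.exp (-y ^ 2 / (2 * τ))) := by
                  rw [ENNReal.ofReal_mul (by norm_num : (0:ℝ) ≤ 2), mul_assoc,
                    ← ENNReal.ofReal_mul (Real.exp_nonneg _), mul_comm (Real.exp _) (g y)]
                  norm_num
        _ = ENNReal.ofReal C + 2 * ∫⁻ y in Set.Ioi (0:ℝ),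
              ENNReal.ofReal (g y * Real.exp (-y ^ 2 / (2 * τ))) := by
            rw [lintegral_const_mul' _ _ (by norm_num)]
        _ = ENNReal.ofReal C + 2 * ENNReal.ofReal K := by
            rw [← ofReal_integral_eq_lintegral_ofReal hgint
              (Filter.Eventually.of_forall fun y => mul_nonneg (hg0 y) (Real.exp_nonneg _))]
        _ = ENNReal.ofReal (C + 2*K) := by
            rw [ENNReal.ofReal_add hC.le (by positivity), ENNReal.ofReal_mul (by norm_num)]
            norm_num
    have hnn : (0 : Ω → ℝ) ≤ᵐ[ℙ] fun ω => |f (X ω)| ^ 2 :=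
      Filter.Eventually.of_forall fun ω => by positivity
    have hms : AEStronglyMeasurable (fun ω => |f (X ω)| ^ 2) ℙ :=
      (((hf.measurable.comp hXmeas).abs.pow_const 2)).aestronglyMeasurable
    rw [integral_eq_lintegral_of_nonneg_ae hnn hms]
    have := ENNReal.toReal_le_of_le_ofReal (by positivity : (0:ℝ) ≤ C + 2*K) key
    linarith
  · -- integrability of |f| * gaussian
    have hGbound : ∀ x : ℝ, (∫ y in (0:ℝ)..|x|, g y) ≤ K * Real.exp (x ^ 2 / (2*τ)) := by
      intro x
      rcases eq_or_lt_of_le (abs_nonneg x) with h | h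
      · rw [← h]
        simp only [intervalIntegral.integral_same]
        positivity
      · set r := |x| with hr
        have hgr : IntervalIntegrable g volume 0 r := g_intble r h
        have hge : IntervalIntegrable (fun y => g y * Real.exp (-y ^ 2 / (2 * τ))
            * Real.exp (r ^ 2 / (2*τ))) volume 0 r := by
          refine IntervalIntegrable.mul_continuousOn (IntervalIntegrable.mul_continuousOn hgr ?_) ?_
          · exact (Real.continuous_exp.comp (by continuity)).continuousOn
          · exact continuousOn_const
        have step1 : (∫ y in (0:ℝ)..r, g y)
            ≤ ∫ y in (0:ℝ)..r, g y * Real.exp (-y ^ 2 / (2 * τ)) * Real.exp (r ^ 2 / (2*τ)) := by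
          refine intervalIntegral.integral_mono_on h.le hgr hge fun y hy => ?_
          have hy0 : 0 ≤ y := hy.1
          have hyr : y ≤ r := hy.2
          have h1 : (1:ℝ) ≤ Real.exp (-y ^ 2 / (2 * τ)) * Real.exp (r ^ 2 / (2*τ)) := by
            rw [← Real.exp_add]
            refine Real.one_le_exp ?_
            have hyr2 : y ^ 2 ≤ r ^ 2 := by nlinarith
            rw [← add_div]
            exact div_nonneg (by linarith) (by positivity)
          calc g y = g y * 1 := by ring
            _ ≤ g y * (Real.exp (-y ^ 2 / (2 * τ)) * Real.exp (r ^ 2 / (2*τ))) := by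
                exact mul_le_mul_of_nonneg_left h1 (hg0 y)
            _ = g y * Real.exp (-y ^ 2 / (2 * τ)) * Real.exp (r ^ 2 / (2*τ)) := by ring
        have step2 : (∫ y in (0:ℝ)..r, g y * Real.exp (-y ^ 2 / (2 * τ)) * Real.exp (r ^ 2 / (2*τ)))
            = (∫ y in (0:ℝ)..r, g y * Real.exp (-y ^ 2 / (2 * τ))) * Real.exp (r ^ 2 / (2*τ)) :=
          intervalIntegral.integral_mul_const _ _
        have step3 : (∫ y in (0:ℝ)..r, g y * Real.exp (-y ^ 2 / (2 * τ))) ≤ K := by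
          rw [intervalIntegral.integral_of_le h.le]
          refine setIntegral_mono_set hgint ?_ ?_
          · exact Filter.Eventually.of_forall fun y => mul_nonneg (hg0 y) (Real.exp_nonneg _)
          · exact Filter.Eventually.of_forall Set.Ioc_subset_Ioi_self
        have hrx : r ^ 2 = x ^ 2 := sq_abs x
        calc (∫ y in (0:ℝ)..r, g y)
            ≤ (∫ y in (0:ℝ)..r, g y * Real.exp (-y ^ 2 / (2 * τ))) * Real.exp (r ^ 2 / (2*τ)) := by
              rw [← step2]; exact step1
          _ ≤ K * Real.exp (r ^ 2 / (2*τ)) := by gcongr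
          _ = K * Real.exp (x ^ 2 / (2*τ)) := by rw [hrx]
    have hbound : ∀ x : ℝ, |f x| * Real.exp (-x ^ 2 / (2 * τ))
        ≤ Real.sqrt C * Real.exp (-x ^ 2 / (2 * τ))
          + Real.sqrt K * Real.exp (-x ^ 2 / (4 * τ)) := by
      intro x
      have hG0 : 0 ≤ ∫ y in (0:ℝ)..|x|, g y :=
        intervalIntegral.integral_nonneg (abs_nonneg x) fun y _ => hg0 y
      have h1 : |f x| ≤ Real.sqrt C + Real.sqrt (K * Real.exp (x ^ 2 / (2*τ))) := by
        calc |f x| = Real.sqrt (|f x| ^ 2) := (Real.sqrt_sq (abs_nonneg _)).symm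
          _ ≤ Real.sqrt (C + ∫ y in (0:ℝ)..|x|, g y) := Real.sqrt_le_sqrt (hfg x)
          _ ≤ Real.sqrt C + Real.sqrt (∫ y in (0:ℝ)..|x|, g y) := sqrt_add_le' hC.le hG0
          _ ≤ Real.sqrt C + Real.sqrt (K * Real.exp (x ^ 2 / (2*τ))) := by
              exact add_le_add (le_refl _) (Real.sqrt_le_sqrt (hGbound x))
      have h2 : Real.sqrt (K * Real.exp (x ^ 2 / (2*τ)))
          = Real.sqrt K * Real.exp (x ^ 2 / (4*τ)) := by
        rw [Real.sqrt_mul hK0]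
        congr 1
        rw [show x ^ 2 / (2*τ) = x ^ 2 / (4*τ) + x ^ 2 / (4*τ) by field_simp; ring,
          Real.exp_add, Real.sqrt_mul_self (Real.exp_nonneg _)]
      have h3 : Real.exp (x ^ 2 / (4*τ)) * Real.exp (-x ^ 2 / (2 * τ))
          = Real.exp (-x ^ 2 / (4 * τ)) := by
        rw [← Real.exp_add]
        congr 1
        field_simp
        ring
      calc |f x| * Real.exp (-x ^ 2 / (2 * τ))
          ≤ (Real.sqrt C + Real.sqrt K * Real.exp (x ^ 2 / (4*τ))) * Real.exp (-x ^ 2 / (2 * τ)) := by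
            rw [← h2]
            exact mul_le_mul_of_nonneg_right h1 (Real.exp_nonneg _)
        _ = Real.sqrt C * Real.exp (-x ^ 2 / (2 * τ))
            + Real.sqrt K * (Real.exp (x ^ 2 / (4*τ)) * Real.exp (-x ^ 2 / (2 * τ))) := by ring
        _ = Real.sqrt C * Real.exp (-x ^ 2 / (2 * τ))
            + Real.sqrt K * Real.exp (-x ^ 2 / (4 * τ)) := by rw [h3]
    have hint1 : Integrable (fun x : ℝ => Real.exp (-x ^ 2 / (2*τ))) := by
      have := integrable_exp_neg_mul_sq (b := 1/(2*τ)) (by positivity)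
      refine this.congr ?_
      filter_upwards with x
      congr 1
      field_simp
    have hint2 : Integrable (fun x : ℝ => Real.exp (-x ^ 2 / (4*τ))) := by
      have := integrable_exp_neg_mul_sq (b := 1/(4*τ)) (by positivity)
      refine this.congr ?_
      filter_upwards with x
      congr 1
      field_simp
    refine Integrable.mono' ((hint1.const_mul (Real.sqrt C)).add
      (hint2.const_mul (Real.sqrt K))) ?_ ?_
    · exact ((hf.abs.mul (by continuity)).aestronglyMeasurable)
    · filter_upwards with x
      rw [Real.norm_eq_abs, abs_of_nonneg (mul_nonneg (abs_nonneg _) (Real.exp_nonneg _))]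
      exact hbound x
end
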